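/- If two first-order terms are unifiable, then there exists a most general unifier θ of them, i.e., a unifier such that every other unifier is an instance of θ. -/

import Mathlib

/-! First-order terms over variables `ℕ` and function symbols `ℕ` (each symbol
used with the arity of its argument list), substitutions, unification, and
flows `t ⊣ u` (with `Var(t) ⊆ Var(u)`, considered up to renaming). -/

/-- First-order terms. -/
inductive Term where
  | var : ℕ → Term
  | fn : ℕ → List Term → Term

mutual
/-- Apply a substitution to a term. -/
def Term.subst (θ : ℕ → Term) : Term → Term
  | .var n => θ n
  | .fn f ts => .fn f (Term.substList θ ts)
/-- Apply a substitution to a list of terms. -/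
def Term.substList (θ : ℕ → Term) : List Term → List Term
  | [] => []
  | t :: ts => Term.subst θ t :: Term.substList θ ts
end

mutual
/-- Variables occurring in a term. -/
def Term.vars : Term → Set ℕ
  | .var n => {n}
  | .fn _ ts => Term.varsList ts
/-- Variables occurring in a list of terms. -/
def Term.varsList : List Term → Set ℕ
  | [] => ∅
  | t :: ts => Term.vars t ∪ Term.varsList ts
end

/-- `θ` is a unifier of `t` and `u`. -/
def IsUnifier (θ : ℕ → Term) (t u : Term) : Prop := t.subst θ = u.subst θ

/-- `θ'` is an instance of `θ` (factors through `θ`). -/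
def InstanceOf (θ' θ : ℕ → Term) : Prop := ∃ ρ, ∀ n, θ' n = (θ n).subst ρ

/-- `θ` is a most general unifier of `t` and `u`. -/
def IsMGU (θ : ℕ → Term) (t u : Term) : Prop :=
  IsUnifier θ t u ∧ ∀ θ', IsUnifier θ' t u → InstanceOf θ' θ

/-- Apply a renaming (a bijection on variables) to a term. -/
def Term.rename (α : ℕ ≃ ℕ) (t : Term) : Term := t.subst fun n => .var (α n)

/-- Two terms are matchable if renamings of them with disjoint sets of
variables are unifiable. -/
def Matchable (t u : Term) : Prop :=
  ∃ α β : ℕ ≃ ℕ, Disjoint (t.rename α).vars (u.rename β).vars ∧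
    ∃ θ, IsUnifier θ (t.rename α) (u.rename β)

/-- A flow `t ⊣ u` with `Var(t) ⊆ Var(u)`. -/
structure RFlow where
  lhs : Term
  rhs : Term
  sub : lhs.vars ⊆ rhs.vars

instance : Inhabited RFlow := ⟨⟨.var 0, .var 0, Set.Subset.rfl⟩⟩

/-- Equality of flows up to renaming. -/
def FlowEquiv (f g : RFlow) : Prop :=
  ∃ α : ℕ ≃ ℕ, g.lhs = f.lhs.rename α ∧ g.rhs = f.rhs.rename α

/-- `r` is a resolution product of `f` and `g`: after renaming `g` apart from
`f`, the MGU `θ` of `f`'s right term and `g`'s left term exists and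
`r = θ(f.lhs) ⊣ θ(g.rhs)`. -/
def FlowCompRel (f g r : RFlow) : Prop :=
  ∃ g' : RFlow, FlowEquiv g g' ∧ Disjoint f.rhs.vars g'.lhs.vars ∧
    ∃ θ, IsMGU θ f.rhs g'.lhs ∧
      r.lhs = f.lhs.subst θ ∧ r.rhs = g'.rhs.subst θ

open Classical in
/-- The product of flows (`none` = undefined = 0). -/
noncomputable def fcomp (f g : RFlow) : Option RFlow :=
  if h : ∃ r, FlowCompRel f g r then some h.choose else none

/-- Product extended to possibly-undefined flows. -/
noncomputable def fcompO (a b : Option RFlow) : Option RFlow :=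
  a.bind fun f => b.bind fun g => fcomp f g

/-- Equality up to renaming of possibly-undefined flows. -/
def OEquiv (a b : Option RFlow) : Prop :=
  (a = none ∧ b = none) ∨ ∃ f g, a = some f ∧ b = some g ∧ FlowEquiv f g


namespace Term

/-- Custom induction principle for nested Term. -/
@[elab_as_elim]
theorem my_ind {P : Term → Prop}
    (hv : ∀ n, P (.var n))
    (hf : ∀ f ts, (∀ t ∈ ts, P t) → P (.fn f ts)) : ∀ t, P t := by
  intro t
  refine Term.rec (motive_1 := P) (motive_2 := fun ts => ∀ t ∈ ts, P t) hv
    (fun f ts h => hf f ts h) ?_ ?_ t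
  · intro t ht; cases ht
  · intro a as ha has t ht
    rcases List.mem_cons.mp ht with rfl | h
    · exact ha
    · exact has t h

theorem substList_eq_map (θ : ℕ → Term) (ts : List Term) :
    Term.substList θ ts = ts.map (Term.subst θ) := by
  induction ts with
  | nil => rfl
  | cons a as ih => simp [Term.substList, ih]

@[simp] theorem subst_var (θ : ℕ → Term) (n : ℕ) : Term.subst θ (.var n) = θ n := rfl
@[simp] theorem subst_fn (θ : ℕ → Term) (f : ℕ) (ts : List Term) :
    Term.subst θ (.fn f ts) = .fn f (ts.map (Term.subst θ)) := by
  rw [Term.subst, substList_eq_map]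

theorem varsList_eq (ts : List Term) :
    Term.varsList ts = ⋃ t ∈ ts, Term.vars t := by
  induction ts with
  | nil => simp [Term.varsList]
  | cons a as ih => simp [Term.varsList, ih]

@[simp] theorem vars_var (n : ℕ) : Term.vars (.var n) = {n} := rfl
@[simp] theorem vars_fn (f : ℕ) (ts : List Term) :
    Term.vars (.fn f ts) = ⋃ t ∈ ts, Term.vars t := by
  rw [Term.vars, varsList_eq]

theorem subst_subst (σ θ : ℕ → Term) (t : Term) :
    (t.subst σ).subst θ = t.subst (fun n => (σ n).subst θ) := by
  induction t using my_ind with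
  | hv n => rfl
  | hf f ts ih =>
    simp only [subst_fn, List.map_map]
    congr 1
    exact List.map_congr_left fun a ha => ih a ha

theorem subst_congr {σ σ' : ℕ → Term} (t : Term)
    (h : ∀ n ∈ t.vars, σ n = σ' n) : t.subst σ = t.subst σ' := by
  induction t using my_ind with
  | hv n => exact h n rfl
  | hf f ts ih =>
    simp only [subst_fn]
    congr 1
    refine List.map_congr_left fun a ha => ih a ha fun n hn => h n ?_
    simp only [vars_fn, Set.mem_iUnion]
    exact ⟨a, ha, hn⟩

@[simp] theorem subst_id (t : Term) : t.subst Term.var = t := by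
  induction t using my_ind with
  | hv n => rfl
  | hf f ts ih =>
    simp only [subst_fn]
    congr 1
    exact (List.map_congr_left fun a ha => ih a ha).trans (List.map_id _)

end Term

namespace Term

mutual
/-- Size of a term. -/
def sizeT : Term → ℕ
  | .var _ => 1
  | .fn _ ts => 1 + sizeL ts
/-- Size of a list of terms. -/
def sizeL : List Term → ℕ
  | [] => 0
  | t :: ts => sizeT t + sizeL ts
end

theorem sizeL_eq (ts : List Term) : sizeL ts = (ts.map sizeT).sum := by
  induction ts with
  | nil => rfl
  | cons a as ih => simp [sizeL, ih]

theorem sizeT_pos (t : Term) : 0 < sizeT t := by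
  cases t <;> simp [sizeT]

theorem sizeT_le_of_mem {t : Term} {ts : List Term} (h : t ∈ ts) :
    sizeT t ≤ sizeL ts := by
  induction ts with
  | nil => cases h
  | cons a as ih =>
    rcases List.mem_cons.mp h with rfl | h
    · simp [sizeL]
    · have := ih h; simp [sizeL]; omega

mutual
/-- Finset of variables of a term. -/
def varsF : Term → Finset ℕ
  | .var n => {n}
  | .fn _ ts => varsLF ts
/-- Finset of variables of a list of terms. -/
def varsLF : List Term → Finset ℕ
  | [] => ∅
  | t :: ts => varsF t ∪ varsLF ts
end

theorem mem_varsF {n : ℕ} : ∀ {t : Term}, n ∈ varsF t ↔ n ∈ t.vars := by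
  intro t
  induction t using my_ind with
  | hv m => simp [varsF, Term.vars]
  | hf f ts ih =>
    simp only [varsF, vars_fn, Set.mem_iUnion]
    induction ts with
    | nil => simp [varsLF]
    | cons a as ihts =>
      simp only [varsLF, Finset.mem_union]
      rw [ih a (List.mem_cons_self),
        ihts (fun t ht => ih t (List.mem_cons_of_mem a ht))]
      constructor
      · rintro (h | ⟨i, hi, h⟩)
        · exact ⟨a, List.mem_cons_self, h⟩
        · exact ⟨i, List.mem_cons_of_mem a hi, h⟩
      · rintro ⟨i, hi, h⟩
        rcases List.mem_cons.mp hi with rfl | hi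
        · exact Or.inl h
        · exact Or.inr ⟨i, hi, h⟩

/-- Occurs check: substituting can only grow size. -/
theorem sizeT_le_subst (θ : ℕ → Term) {x : ℕ} {u : Term} (h : x ∈ u.vars) :
    sizeT (θ x) ≤ sizeT (u.subst θ) := by
  induction u using my_ind with
  | hv n => simp only [vars_var, Set.mem_singleton_iff] at h; subst h; rfl
  | hf f ts ih =>
    simp only [vars_fn, Set.mem_iUnion] at h
    obtain ⟨t, ht, hx⟩ := h
    have h1 : sizeT (θ x) ≤ sizeT (t.subst θ) := ih t ht hx
    have h2 : sizeT (t.subst θ) ≤ sizeL (ts.map (Term.subst θ)) :=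
      sizeT_le_of_mem (List.mem_map_of_mem ht)
    simp only [subst_fn, sizeT]
    omega

theorem occurs_check {θ : ℕ → Term} {x : ℕ} {f : ℕ} {ts : List Term}
    (h : x ∈ (Term.fn f ts).vars) : θ x ≠ (Term.fn f ts).subst θ := by
  simp only [vars_fn, Set.mem_iUnion] at h
  obtain ⟨t, ht, hx⟩ := h
  intro heq
  have h1 : sizeT (θ x) ≤ sizeT (t.subst θ) := sizeT_le_subst θ hx
  have h2 : sizeT (t.subst θ) ≤ sizeL (ts.map (Term.subst θ)) :=
    sizeT_le_of_mem (List.mem_map_of_mem ht)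
  rw [heq] at h1
  simp only [subst_fn, sizeT] at h1
  omega

/-- Variables of a substituted term. -/
theorem vars_subst {σ : ℕ → Term} {t : Term} :
    (t.subst σ).vars = ⋃ n ∈ t.vars, (σ n).vars := by
  induction t using my_ind with
  | hv n => simp
  | hf f ts ih =>
    simp only [subst_fn, vars_fn]
    ext m
    simp only [Set.mem_iUnion, List.mem_map]
    constructor
    · rintro ⟨s, ⟨a, ha, rfl⟩, hm⟩
      rw [ih a ha] at hm
      simp only [Set.mem_iUnion] at hm
      obtain ⟨n, hn, hmn⟩ := hm
      exact ⟨n, ⟨a, ha, hn⟩, hmn⟩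
    · rintro ⟨n, ⟨a, ha, hn⟩, hmn⟩
      refine ⟨a.subst σ, ⟨a, ha, rfl⟩, ?_⟩
      rw [ih a ha]
      simp only [Set.mem_iUnion]
      exact ⟨n, hn, hmn⟩

end Term

/-- A simultaneous unifier of a list of equations. -/
def UnifL (θ : ℕ → Term) (E : List (Term × Term)) : Prop :=
  ∀ p ∈ E, Term.subst θ p.1 = Term.subst θ p.2

/-- Variables of a list of equations. -/
def varsE : List (Term × Term) → Finset ℕ
  | [] => ∅
  | p :: E => p.1.varsF ∪ p.2.varsF ∪ varsE E

/-- Size of a list of equations. -/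
def sizeE (E : List (Term × Term)) : ℕ :=
  (E.map fun p => p.1.sizeT + p.2.sizeT).sum

theorem mem_varsE {n : ℕ} : ∀ {E : List (Term × Term)},
    n ∈ varsE E ↔ ∃ p ∈ E, n ∈ p.1.varsF ∪ p.2.varsF := by
  intro E
  induction E with
  | nil => simp [varsE]
  | cons p E ih =>
    simp only [varsE, Finset.mem_union, ih, List.mem_cons]
    constructor
    · rintro ((h | h) | ⟨q, hq, hnq⟩)
      · exact ⟨p, Or.inl rfl, Or.inl h⟩
      · exact ⟨p, Or.inl rfl, Or.inr h⟩
      · exact ⟨q, Or.inr hq, hnq⟩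
    · rintro ⟨q, rfl | hq, hnq⟩
      · exact Or.inl hnq
      · exact Or.inr ⟨q, hq, hnq⟩

/-- The single-variable substitution `x ↦ u`. -/
def elimSub (x : ℕ) (u : Term) : ℕ → Term :=
  fun n => if n = x then u else .var n

/-- Apply a substitution to all equations. -/
def substE (σ : ℕ → Term) (E : List (Term × Term)) : List (Term × Term) :=
  E.map fun p => (p.1.subst σ, p.2.subst σ)

theorem subst_stable {x : ℕ} {u : Term} {s : Term} (hx : x ∉ s.vars) :
    s.subst (elimSub x u) = s := by
  have := Term.subst_congr (σ := elimSub x u) (σ' := Term.var) s ?_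
  · rwa [Term.subst_id] at this
  · intro n hn
    have : n ≠ x := fun h => hx (h ▸ hn)
    simp [elimSub, this]

theorem elim_key {x : ℕ} {u : Term} {θ : ℕ → Term} (h : θ x = u.subst θ) (s : Term) :
    (s.subst (elimSub x u)).subst θ = s.subst θ := by
  rw [Term.subst_subst]
  have : (fun n => (elimSub x u n).subst θ) = θ := by
    funext n
    by_cases hn : n = x
    · subst hn; simp [elimSub, h]
    · simp [elimSub, hn]
  rw [this]

theorem elim_build {x : ℕ} {u : Term} (hx : x ∉ u.vars) (E' : List (Term × Term))
    (h1 : ∃ θ1, UnifL θ1 (substE (elimSub x u) E') ∧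
      ∀ θ', UnifL θ' (substE (elimSub x u) E') → InstanceOf θ' θ1) :
    ∃ θ, (θ x = u.subst θ ∧ UnifL θ E') ∧
      ∀ θ', (θ' x = u.subst θ' ∧ UnifL θ' E') → InstanceOf θ' θ := by
  obtain ⟨θ1, h1u, h1m⟩ := h1
  set σ := elimSub x u with hσ
  refine ⟨fun n => (σ n).subst θ1, ⟨?_, ?_⟩, ?_⟩
  · have h2 : u.subst (fun n => (σ n).subst θ1) = (u.subst σ).subst θ1 :=
      (Term.subst_subst σ θ1 u).symm
    rw [h2, subst_stable hx]
    simp [σ, elimSub]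
  · intro p hp
    have h2 : ∀ s : Term, s.subst (fun n => (σ n).subst θ1) = (s.subst σ).subst θ1 :=
      fun s => (Term.subst_subst σ θ1 s).symm
    rw [h2, h2]
    exact h1u _ (List.mem_map_of_mem hp)
  · rintro θ' ⟨hx', hE'⟩
    have hθ'' : UnifL θ' (substE σ E') := by
      rintro q hq
      simp only [substE, List.mem_map] at hq
      obtain ⟨p, hp, rfl⟩ := hq
      simp only
      rw [elim_key hx', elim_key hx']
      exact hE' p hp
    obtain ⟨ρ, hρ⟩ := h1m θ' hθ''
    refine ⟨ρ, fun n => ?_⟩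
    have h2 : ((σ n).subst θ1).subst ρ = (σ n).subst (fun m => (θ1 m).subst ρ) :=
      Term.subst_subst θ1 ρ (σ n)
    have h3 : (fun m => (θ1 m).subst ρ) = θ' := by
      funext m; exact (hρ m).symm
    rw [h2, h3]
    by_cases hn : n = x
    · subst hn; simp [σ, elimSub, hx'.symm]
    · simp [σ, elimSub, hn]

theorem varsE_substE {x : ℕ} {u : Term} (hx : x ∉ u.vars) (E' : List (Term × Term))
    {n : ℕ} (hn : n ∈ varsE (substE (elimSub x u) E')) :
    n ≠ x ∧ (n ∈ varsE E' ∨ n ∈ u.varsF) := by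
  rw [mem_varsE] at hn
  obtain ⟨q, hq, hnq⟩ := hn
  simp only [substE, List.mem_map] at hq
  obtain ⟨p, hp, rfl⟩ := hq
  have main : ∀ s : Term, n ∈ (s.subst (elimSub x u)).varsF →
      n ≠ x ∧ (n ∈ s.varsF ∨ n ∈ u.varsF) := by
    intro s hs
    rw [Term.mem_varsF, Term.vars_subst] at hs
    simp only [Set.mem_iUnion] at hs
    obtain ⟨m, hm, hnm⟩ := hs
    by_cases hmx : m = x
    · subst hmx
      simp only [elimSub, if_pos rfl] at hnm
      refine ⟨fun h => hx (h ▸ hnm), Or.inr (Term.mem_varsF.mpr hnm)⟩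
    · simp only [elimSub, if_neg hmx, Term.vars_var, Set.mem_singleton_iff] at hnm
      subst hnm
      exact ⟨hmx, Or.inl (Term.mem_varsF.mpr hm)⟩
  rcases Finset.mem_union.mp hnq with h | h
  · obtain ⟨h1, h2⟩ := main p.1 h
    refine ⟨h1, h2.imp (fun hh => mem_varsE.mpr ⟨p, hp, Finset.mem_union_left _ hh⟩) id⟩
  · obtain ⟨h1, h2⟩ := main p.2 h
    refine ⟨h1, h2.imp (fun hh => mem_varsE.mpr ⟨p, hp, Finset.mem_union_right _ hh⟩) id⟩

namespace Term
@[simp] theorem varsF_var (n : ℕ) : varsF (.var n) = {n} := rfl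
@[simp] theorem varsF_fn (f : ℕ) (ts : List Term) : varsF (.fn f ts) = varsLF ts := rfl
@[simp] theorem sizeT_var (n : ℕ) : sizeT (.var n) = 1 := rfl
@[simp] theorem sizeT_fn (f : ℕ) (ts : List Term) : sizeT (.fn f ts) = 1 + sizeL ts := rfl

theorem mem_varsLF {n : ℕ} : ∀ {ts : List Term},
    n ∈ varsLF ts ↔ ∃ t ∈ ts, n ∈ varsF t := by
  intro ts
  induction ts with
  | nil => simp [varsLF]
  | cons a as ih =>
    simp only [varsLF, Finset.mem_union, ih, List.mem_cons]
    constructor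
    · rintro (h | ⟨t, ht, hn⟩)
      · exact ⟨a, Or.inl rfl, h⟩
      · exact ⟨t, Or.inr ht, hn⟩
    · rintro ⟨t, rfl | ht, hn⟩
      · exact Or.inl hn
      · exact Or.inr ⟨t, ht, hn⟩
end Term

theorem sizeE_zip : ∀ {ts us : List Term}, ts.length = us.length →
    sizeE (ts.zip us) = Term.sizeL ts + Term.sizeL us := by
  intro ts
  induction ts with
  | nil =>
    intro us h
    cases us with
    | nil => rfl
    | cons b bs => simp at h
  | cons a as ih =>
    intro us h
    cases us with
    | nil => simp at h
    | cons b bs =>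
      simp only [List.zip_cons_cons, sizeE, List.map_cons, List.sum_cons, Term.sizeL]
      rw [show ((as.zip bs).map fun p => p.1.sizeT + p.2.sizeT).sum = sizeE (as.zip bs) from rfl,
        ih (by simpa using h)]
      ring

theorem map_subst_eq_iff (θ : ℕ → Term) : ∀ {ts us : List Term}, ts.length = us.length →
    (ts.map (Term.subst θ) = us.map (Term.subst θ) ↔
      ∀ p ∈ ts.zip us, Term.subst θ p.1 = Term.subst θ p.2) := by
  intro ts
  induction ts with
  | nil =>
    intro us h
    cases us with
    | nil => simp
    | cons b bs => simp at h
  | cons a as ih =>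
    intro us h
    cases us with
    | nil => simp at h
    | cons b bs =>
      simp only [List.map_cons, List.cons.injEq, List.zip_cons_cons, List.mem_cons]
      rw [ih (by simpa using h)]
      constructor
      · rintro ⟨h1, h2⟩ p hp
        rcases hp with rfl | hp
        · exact h1
        · exact h2 p hp
      · intro h2
        exact ⟨h2 _ (Or.inl rfl), fun p hp => h2 p (Or.inr hp)⟩

theorem varsE_cons (p : Term × Term) (E : List (Term × Term)) :
    varsE (p :: E) = p.1.varsF ∪ p.2.varsF ∪ varsE E := rfl

theorem sizeE_cons (p : Term × Term) (E : List (Term × Term)) :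
    sizeE (p :: E) = p.1.sizeT + p.2.sizeT + sizeE E := by
  simp [sizeE]

theorem card_substE_lt {x : ℕ} {u : Term} {E' : List (Term × Term)}
    (hxu : x ∉ u.vars) {V : Finset ℕ} (hx : x ∈ V) (hE' : varsE E' ⊆ V)
    (huV : u.varsF ⊆ V) :
    (varsE (substE (elimSub x u) E')).card < V.card := by
  have hsub : varsE (substE (elimSub x u) E') ⊆ V.erase x := by
    intro n hn
    obtain ⟨h1, h2⟩ := varsE_substE hxu E' hn
    exact Finset.mem_erase.mpr ⟨h1, h2.elim (fun h => hE' h) (fun h => huV h)⟩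
  exact lt_of_le_of_lt (Finset.card_le_card hsub) (Finset.card_erase_lt_of_mem hx)

theorem elim_full {x : ℕ} {u : Term} {E' : List (Term × Term)} (hxu : x ∉ u.vars)
    (hex1 : ∃ θ0, θ0 x = u.subst θ0 ∧ UnifL θ0 E')
    (hrec : (∃ θ, UnifL θ (substE (elimSub x u) E')) →
      ∃ θ1, UnifL θ1 (substE (elimSub x u) E') ∧
        ∀ θ', UnifL θ' (substE (elimSub x u) E') → InstanceOf θ' θ1) :
    ∃ θ, (θ x = u.subst θ ∧ UnifL θ E') ∧
      ∀ θ', (θ' x = u.subst θ' ∧ UnifL θ' E') → InstanceOf θ' θ := by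
  apply elim_build hxu
  apply hrec
  obtain ⟨θ0, hx0, h0⟩ := hex1
  refine ⟨θ0, fun q hq => ?_⟩
  simp only [substE, List.mem_map] at hq
  obtain ⟨p, hp, rfl⟩ := hq
  simp only
  rw [elim_key hx0, elim_key hx0]
  exact h0 p hp

theorem mguL_exists (N : ℕ) : ∀ S (E : List (Term × Term)),
    (varsE E).card ≤ N → sizeE E ≤ S → (∃ θ, UnifL θ E) →
    ∃ θ, UnifL θ E ∧ ∀ θ', UnifL θ' E → InstanceOf θ' θ := by
  induction N using Nat.strong_induction_on with
  | _ N IHN =>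
  intro S
  induction S using Nat.strong_induction_on with
  | _ S IHS =>
  intro E hN hS hex
  match E with
  | [] =>
    exact ⟨Term.var, fun p hp => absurd hp List.not_mem_nil,
      fun θ' _ => ⟨θ', fun n => rfl⟩⟩
  | (t, u) :: E' =>
  have hheadL : Term.varsF t ⊆ varsE ((t, u) :: E') := by
    rw [varsE_cons]; intro n hn
    exact Finset.mem_union_left _ (Finset.mem_union_left _ hn)
  have hheadR : Term.varsF u ⊆ varsE ((t, u) :: E') := by
    rw [varsE_cons]; intro n hn
    exact Finset.mem_union_left _ (Finset.mem_union_right _ hn)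
  have htail : varsE E' ⊆ varsE ((t, u) :: E') := by
    rw [varsE_cons]; intro n hn
    exact Finset.mem_union_right _ hn
  cases t with
  | var x =>
    by_cases hxu : x ∈ u.vars
    · cases u with
      | var y =>
        have hyx : y = x := by have := hxu; simp [Term.vars] at this; omega
        subst hyx
        -- drop the trivial head equation
        have hs' : sizeE E' < S := by
          rw [sizeE_cons] at hS; simp at hS; omega
        have hN' : (varsE E').card ≤ N :=
          le_trans (Finset.card_le_card htail) hN
        have hexE' : ∃ θ, UnifL θ E' :=
          hex.imp fun θ0 h0 p hp => h0 p (List.mem_cons_of_mem _ hp)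
        obtain ⟨θ, hθu, hθm⟩ := IHS (sizeE E') hs' E' hN' le_rfl hexE'
        refine ⟨θ, fun p hp => ?_, fun θ' h' => hθm θ' fun p hp => h' p (List.mem_cons_of_mem _ hp)⟩
        rcases List.mem_cons.mp hp with rfl | hp
        · rfl
        · exact hθu p hp
      | fn g us =>
        exfalso
        obtain ⟨θ0, h0⟩ := hex
        exact Term.occurs_check hxu (h0 _ (List.mem_cons_self))
    · -- eliminate x ↦ u
      have hxE : x ∈ varsE ((Term.var x, u) :: E') := hheadL (by simp)
      have hcard : (varsE (substE (elimSub x u) E')).card < N :=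
        lt_of_lt_of_le (card_substE_lt hxu hxE htail hheadR) hN
      have hex1 : ∃ θ0, θ0 x = u.subst θ0 ∧ UnifL θ0 E' := by
        obtain ⟨θ0, h0⟩ := hex
        exact ⟨θ0, h0 _ (List.mem_cons_self),
          fun p hp => h0 p (List.mem_cons_of_mem _ hp)⟩
      obtain ⟨θ, ⟨hθx, hθE'⟩, hθm⟩ := elim_full hxu hex1
        (fun hx => IHN _ hcard (sizeE (substE (elimSub x u) E')) _ le_rfl le_rfl hx)
      refine ⟨θ, fun p hp => ?_, fun θ' h' => ?_⟩
      · rcases List.mem_cons.mp hp with rfl | hp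
        · exact hθx
        · exact hθE' p hp
      · exact hθm θ' ⟨h' _ (List.mem_cons_self),
          fun p hp => h' p (List.mem_cons_of_mem _ hp)⟩
  | fn f ts =>
    cases u with
    | var x =>
      by_cases hxt : x ∈ (Term.fn f ts).vars
      · exfalso
        obtain ⟨θ0, h0⟩ := hex
        exact Term.occurs_check hxt (h0 _ (List.mem_cons_self)).symm
      · have hxE : x ∈ varsE ((Term.fn f ts, Term.var x) :: E') := hheadR (by simp)
        have hcard : (varsE (substE (elimSub x (Term.fn f ts)) E')).card < N :=
          lt_of_lt_of_le (card_substE_lt hxt hxE htail hheadL) hN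
        have hex1 : ∃ θ0, θ0 x = (Term.fn f ts).subst θ0 ∧ UnifL θ0 E' := by
          obtain ⟨θ0, h0⟩ := hex
          exact ⟨θ0, (h0 _ (List.mem_cons_self)).symm,
            fun p hp => h0 p (List.mem_cons_of_mem _ hp)⟩
        obtain ⟨θ, ⟨hθx, hθE'⟩, hθm⟩ := elim_full hxt hex1
          (fun hx => IHN _ hcard (sizeE (substE (elimSub x (Term.fn f ts)) E')) _ le_rfl le_rfl hx)
        refine ⟨θ, fun p hp => ?_, fun θ' h' => ?_⟩
        · rcases List.mem_cons.mp hp with rfl | hp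
          · exact hθx.symm
          · exact hθE' p hp
        · exact hθm θ' ⟨(h' _ (List.mem_cons_self)).symm,
            fun p hp => h' p (List.mem_cons_of_mem _ hp)⟩
    | fn g us =>
      obtain ⟨θ0, h0⟩ := hex
      have h00 := h0 _ (List.mem_cons_self)
      simp only [Term.subst_fn, Term.fn.injEq] at h00
      obtain ⟨rfl, hmap⟩ := h00
      have hlen : ts.length = us.length := by
        have := congrArg List.length hmap; simpa using this
      -- equivalence of unifier sets
      have hiff : ∀ θ, UnifL θ ((Term.fn f ts, Term.fn f us) :: E') ↔
          UnifL θ (ts.zip us ++ E') := by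
        intro θ
        constructor
        · intro h q hq
          rcases List.mem_append.mp hq with hq | hq
          · have := h _ (List.mem_cons_self)
            simp only [Term.subst_fn, Term.fn.injEq, true_and] at this
            exact (map_subst_eq_iff θ hlen).mp this q hq
          · exact h q (List.mem_cons_of_mem _ hq)
        · intro h p hp
          rcases List.mem_cons.mp hp with rfl | hp
          · simp only [Term.subst_fn, Term.fn.injEq, true_and]
            exact (map_subst_eq_iff θ hlen).mpr
              (fun q hq => h q (List.mem_append_left _ hq))
          · exact h p (List.mem_append_right _ hp)
      have hsz : sizeE (ts.zip us ++ E') < S := by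
        have h1 : sizeE (ts.zip us ++ E') = sizeE (ts.zip us) + sizeE E' := by
          simp [sizeE]
        rw [h1, sizeE_zip hlen]
        rw [sizeE_cons] at hS
        simp only [Term.sizeT_fn] at hS
        omega
      have hvs : varsE (ts.zip us ++ E') ⊆ varsE ((Term.fn f ts, Term.fn f us) :: E') := by
        intro n hn
        rw [mem_varsE] at hn
        obtain ⟨q, hq, hnq⟩ := hn
        rcases List.mem_append.mp hq with hq | hq
        · obtain ⟨hq1, hq2⟩ := List.of_mem_zip hq
          rcases Finset.mem_union.mp hnq with h | h
          · exact hheadL (by simpa using Term.mem_varsLF.mpr ⟨q.1, hq1, h⟩)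
          · exact hheadR (by simpa using Term.mem_varsLF.mpr ⟨q.2, hq2, h⟩)
        · exact htail (mem_varsE.mpr ⟨q, hq, hnq⟩)
      obtain ⟨θ, hθu, hθm⟩ := IHS (sizeE (ts.zip us ++ E')) hsz (ts.zip us ++ E')
        (le_trans (Finset.card_le_card hvs) hN) le_rfl
        ⟨θ0, (hiff θ0).mp h0⟩
      exact ⟨θ, (hiff θ).mpr hθu, fun θ' h' => hθm θ' ((hiff θ').mp h')⟩

/-- if two first-order terms are unifiable then they have a most
general unifier. -/
theorem mgu_exists (t u : Term) (h : ∃ θ, IsUnifier θ t u) :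
    ∃ θ, IsMGU θ t u := by
  have := mguL_exists (varsE [(t, u)]).card (sizeE [(t, u)]) [(t, u)] le_rfl le_rfl ?_
  · obtain ⟨θ, hθu, hθm⟩ := this
    refine ⟨θ, hθu _ (List.mem_cons_self), fun θ' h' => ?_⟩
    apply hθm
    intro p hp
    rcases List.mem_cons.mp hp with rfl | hp
    · exact h'
    · cases hp
  · obtain ⟨θ, hθ⟩ := h
    refine ⟨θ, fun p hp => ?_⟩
    rcases List.mem_cons.mp hp with rfl | hp
    · exact hθ
    · cases hp
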